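/- Let f : ℝ → ℝ be convex and nondecreasing with f(x) = 0 for all x ≤ 0, let f'₊ denote its right derivative (a nondecreasing right-continuous function) and μ_{f'} the Lebesgue–Stieltjes measure of f'₊. Let T > 0 and let c be differentiable on a neighborhood of θ ∈ ℝ, with c' admitting a right derivative c''_r(θ) at θ, and assume c(θ) > T. Set a = c(θ) − T, L = c'(θ), and H(θ') = ∫₀^T f((c(θ') − t)⁺) dt. Then the derivative H' has a right derivative at θ equal to c''_r(θ)·[ f(c(θ)) − f(a) ] + L²·[ f'₊(c(θ)) − f'₊(a) − 1_{L<0}·( μ_{f'}({c(θ)}) − μ_{f'}({a}) ) ]. -/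

import Mathlib

open MeasureTheory Set Filter Function Topology

lemma aux_slope_le_rd {f g : ℝ → ℝ} (hf_conv : ConvexOn ℝ Set.univ f)
    (hg : ∀ x, HasDerivWithinAt f (g x) (Ioi x) x) {y z : ℝ} (hyz : y < z) :
    slope f y z ≤ g z := by
  apply ge_of_tendsto ((hasDerivWithinAt_iff_tendsto_slope' (notMem_Ioi.mpr le_rfl)).mp (hg z))
  filter_upwards [self_mem_nhdsWithin] with t (ht : z < t)
  rw [slope_comm, slope_def_field, slope_def_field]
  exact hf_conv.secant_mono (mem_univ z) (mem_univ y) (mem_univ t) hyz.ne (ne_of_gt ht)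
    (by linarith)

lemma aux_left_deriv {f g : ℝ → ℝ} (hf_conv : ConvexOn ℝ Set.univ f)
    (hg : ∀ x, HasDerivWithinAt f (g x) (Ioi x) x) (hg_mono : Monotone g) (x : ℝ) :
    HasDerivWithinAt f (leftLim g x) (Iic x) x := by
  rw [hasDerivWithinAt_iff_tendsto_slope]
  have h1 : Iic x \ {x} = Iio x := Iic_diff_right
  rw [h1]
  apply tendsto_of_tendsto_of_tendsto_of_le_of_le' (hg_mono.tendsto_leftLim x)
    tendsto_const_nhds
  · filter_upwards [self_mem_nhdsWithin] with y (hy : y < x)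
    rw [slope_comm]
    exact hf_conv.le_slope_of_hasDerivWithinAt_Ioi (mem_univ y) (mem_univ x) hy (hg y)
  · filter_upwards [self_mem_nhdsWithin] with y (hy : y < x)
    rw [slope_comm, slope_def_field]
    have hxy : (0:ℝ) < x - y := by linarith
    have key : ∀ z ∈ Ioo y x,
        (f x - f y) / (x - y) ≤ ((z - y) * leftLim g x + (x - z) * g x) / (x - y) := by
      intro z hz
      have hzy : (0:ℝ) < z - y := by linarith [hz.1]
      have hxz : (0:ℝ) < x - z := by linarith [hz.2]
      have h1 : f z - f y ≤ (z - y) * g z := by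
        have := aux_slope_le_rd hf_conv hg hz.1
        rw [slope_def_field, div_le_iff₀ hzy] at this
        linarith [this]
      have h2 : g z ≤ leftLim g x := hg_mono.le_leftLim hz.2
      have h3 : f x - f z ≤ (x - z) * g x := by
        have := aux_slope_le_rd hf_conv hg hz.2
        rw [slope_def_field, div_le_iff₀ hxz] at this
        linarith [this]
      have hnum : f x - f y ≤ (z - y) * leftLim g x + (x - z) * g x := by
        nlinarith [mul_le_mul_of_nonneg_left h2 hzy.le]
      gcongr
    have htt : Tendsto (fun z => ((z - y) * leftLim g x + (x - z) * g x) / (x - y))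
        (𝓝[<] x) (𝓝 (leftLim g x)) := by
      have hcont : Tendsto (fun z => ((z - y) * leftLim g x + (x - z) * g x) / (x - y))
          (𝓝 x) (𝓝 (((x - y) * leftLim g x + (x - x) * g x) / (x - y))) := by
        apply Filter.Tendsto.div_const
        exact (((continuous_id.sub continuous_const).mul continuous_const).add
          ((continuous_const.sub continuous_id).mul continuous_const)).tendsto x
      have hval : ((x - y) * leftLim g x + (x - x) * g x) / (x - y) = leftLim g x := by
        field_simp
        ring
      rw [hval] at hcont
      exact hcont.mono_left nhdsWithin_le_nhds
    exact ge_of_tendsto htt (eventually_of_mem (Ioo_mem_nhdsLT_of_mem ⟨hy, le_rfl⟩) key)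

lemma aux_singleton {g : ℝ → ℝ} (hg_mono : Monotone g)
    (μ' : Measure ℝ)
    (hμ' : ∀ a b, a ≤ b → μ' (Ioc a b) = ENNReal.ofReal (g b - g a)) (x : ℝ) :
    (μ' {x}).toReal = g x - leftLim g x := by
  set s : ℕ → Set ℝ := fun n => Ioc (x - ((n : ℝ) + 1)⁻¹) x with hs
  have hanti : Antitone s := by
    intro n m hnm
    apply Ioc_subset_Ioc_left
    have : ((n : ℝ) + 1)⁻¹ ≥ ((m : ℝ) + 1)⁻¹ := by
      apply inv_anti₀ (by positivity)
      have : (n : ℝ) ≤ m := Nat.cast_le.mpr hnm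
      linarith
    linarith
  have hiInter : ⋂ n, s n = {x} := by
    ext z
    simp only [mem_iInter, mem_Ioc, mem_singleton_iff, hs]
    constructor
    · intro h
      by_contra hne
      have hzx : z < x := lt_of_le_of_ne (h 0).2 hne
      obtain ⟨n, hn⟩ := exists_nat_one_div_lt (sub_pos.mpr hzx)
      have := (h n).1
      rw [one_div] at hn
      linarith
    · rintro rfl
      exact fun n => ⟨by simp [sub_lt_self_iff]; positivity, le_rfl⟩
  have hmeas : Tendsto (fun n => μ' (s n)) atTop (𝓝 (μ' {x})) := by
    have := tendsto_measure_iInter_atTop (μ := μ')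
      (fun n => measurableSet_Ioc.nullMeasurableSet) hanti
      ⟨0, by rw [hμ' _ _ (by norm_num)]; exact ENNReal.ofReal_ne_top⟩
    rwa [hiInter] at this
  have hseq : Tendsto (fun n : ℕ => x - ((n : ℝ) + 1)⁻¹) atTop (𝓝[<] x) := by
    apply tendsto_nhdsWithin_of_tendsto_nhds_of_eventually_within
    · have : Tendsto (fun n : ℕ => ((n : ℝ) + 1)⁻¹) atTop (𝓝 0) :=
        tendsto_one_div_add_atTop_nhds_zero_nat.congr (fun n => by rw [one_div])
      simpa using tendsto_const_nhds.sub this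
    · filter_upwards with n
      simp [mem_Iio, sub_lt_self_iff]
      positivity
  have hgl : Tendsto (fun n : ℕ => g (x - ((n : ℝ) + 1)⁻¹)) atTop (𝓝 (leftLim g x)) :=
    (hg_mono.tendsto_leftLim x).comp hseq
  have hmeas2 : Tendsto (fun n => μ' (s n)) atTop (𝓝 (ENNReal.ofReal (g x - leftLim g x))) := by
    have : (fun n => μ' (s n)) = fun n : ℕ => ENNReal.ofReal (g x - g (x - ((n : ℝ) + 1)⁻¹)) := by
      funext n
      exact hμ' _ _ (by simp only [sub_le_self_iff]; positivity)
    rw [this]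
    exact (ENNReal.continuous_ofReal.tendsto _).comp (tendsto_const_nhds.sub hgl)
  have : μ' {x} = ENNReal.ofReal (g x - leftLim g x) := tendsto_nhds_unique hmeas hmeas2
  rw [this, ENNReal.toReal_ofReal (sub_nonneg.mpr (hg_mono.leftLim_le le_rfl))]

lemma aux_chain {f : ℝ → ℝ} {dR dL : ℝ} {c : ℝ → ℝ} {θ L : ℝ}
    (hR : HasDerivWithinAt f dR (Ioi (c θ)) (c θ))
    (hL : HasDerivWithinAt f dL (Iic (c θ)) (c θ))
    (hc : HasDerivWithinAt c L (Ici θ) θ) :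
    HasDerivWithinAt (fun t => f (c t)) (L * (if L < 0 then dL else dR)) (Ici θ) θ := by
  have hIci : Ici θ \ {θ} = Ioi θ := Ici_sdiff_left
  have hslopec : Tendsto (slope c θ) (𝓝[>] θ) (𝓝 L) := by
    have := hasDerivWithinAt_iff_tendsto_slope.mp hc
    rwa [hIci] at this
  have hccont : Tendsto c (𝓝[>] θ) (𝓝 (c θ)) :=
    hc.continuousWithinAt.tendsto.mono_left (nhdsWithin_mono θ Ioi_subset_Ici_self)
  have hRs : Tendsto (slope f (c θ)) (𝓝[>] (c θ)) (𝓝 dR) :=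
    (hasDerivWithinAt_iff_tendsto_slope' (notMem_Ioi.mpr le_rfl)).mp hR
  have hLs : Tendsto (slope f (c θ)) (𝓝[<] (c θ)) (𝓝 dL) := by
    have := hasDerivWithinAt_iff_tendsto_slope.mp hL
    rwa [Iic_diff_right] at this
  have key : ∀ t, slope (fun t => f (c t)) θ t = slope f (c θ) (c t) * slope c θ t := by
    intro t
    by_cases h : c t = c θ
    · simp [slope_def_field, h, sub_self]
    · rw [slope_def_field, slope_def_field, slope_def_field, div_mul_div_comm,
        mul_comm (c t - c θ) (t - θ), mul_div_mul_right _ _ (sub_ne_zero.mpr h)]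
  rw [hasDerivWithinAt_iff_tendsto_slope, hIci]
  have hkey : slope (fun t => f (c t)) θ = fun t => slope f (c θ) (c t) * slope c θ t :=
    funext key
  rw [hkey]
  rcases lt_trichotomy L 0 with hL0 | hL0 | hL0
  · rw [if_pos hL0]
    have hev : ∀ᶠ t in 𝓝[>] θ, c t < c θ := by
      filter_upwards [hslopec (Iio_mem_nhds hL0), self_mem_nhdsWithin] with t ht (ht2 : θ < t)
      simp only [mem_preimage, mem_Iio, slope_def_field] at ht
      rcases div_neg_iff.mp ht with ⟨_, h⟩ | ⟨h, _⟩ <;> linarith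
    have hcc : Tendsto c (𝓝[>] θ) (𝓝[<] (c θ)) :=
      tendsto_nhdsWithin_iff.mpr ⟨hccont, hev⟩
    have := (hLs.comp hcc).mul hslopec
    rwa [mul_comm] at this
  · subst hL0
    rw [if_neg (lt_irrefl 0), zero_mul]
    set K := max |dR| |dL| + 1 with hK
    have hK0 : (0:ℝ) ≤ K := by positivity
    have hbR : ∀ᶠ y in 𝓝[>] (c θ), |slope f (c θ) y| ≤ K := by
      filter_upwards [hRs (Metric.ball_mem_nhds dR one_pos)] with y hy
      simp only [mem_preimage, Metric.mem_ball, Real.dist_eq] at hy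
      have h2 : |dR| ≤ max |dR| |dL| := le_max_left _ _
      linarith [abs_sub_abs_le_abs_sub (slope f (c θ) y) dR]
    have hbL : ∀ᶠ y in 𝓝[<] (c θ), |slope f (c θ) y| ≤ K := by
      filter_upwards [hLs (Metric.ball_mem_nhds dL one_pos)] with y hy
      simp only [mem_preimage, Metric.mem_ball, Real.dist_eq] at hy
      have h2 : |dL| ≤ max |dR| |dL| := le_max_right _ _
      linarith [abs_sub_abs_le_abs_sub (slope f (c θ) y) dL]
    have hb : ∀ᶠ y in 𝓝 (c θ), |slope f (c θ) y| ≤ K := by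
      rw [← nhdsNE_sup_pure, eventually_sup]
      constructor
      · rw [← nhdsLT_sup_nhdsGT, eventually_sup]
        exact ⟨hbL, hbR⟩
      · rw [eventually_pure, slope_def_field, sub_self, zero_div, abs_zero]
        exact hK0
    have hbt : ∀ᶠ t in 𝓝[>] θ, |slope f (c θ) (c t)| ≤ K := hccont.eventually hb
    have h1 : ∀ᶠ t in 𝓝[>] θ, ‖slope f (c θ) (c t) * slope c θ t‖ ≤ K * |slope c θ t| := by
      filter_upwards [hbt] with t ht
      rw [Real.norm_eq_abs, abs_mul]
      exact mul_le_mul_of_nonneg_right ht (abs_nonneg _)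
    have h2 : Tendsto (fun t => K * |slope c θ t|) (𝓝[>] θ) (𝓝 0) := by
      have := (hslopec.abs).const_mul K
      simpa using this
    exact squeeze_zero_norm' h1 h2
  · rw [if_neg (not_lt.mpr hL0.le)]
    have hev : ∀ᶠ t in 𝓝[>] θ, c θ < c t := by
      filter_upwards [hslopec (Ioi_mem_nhds hL0), self_mem_nhdsWithin] with t ht (ht2 : θ < t)
      simp only [mem_preimage, mem_Ioi, slope_def_field] at ht
      rcases div_pos_iff.mp ht with ⟨h, _⟩ | ⟨_, h⟩ <;> linarith
    have hcc : Tendsto c (𝓝[>] θ) (𝓝[>] (c θ)) :=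
      tendsto_nhdsWithin_iff.mpr ⟨hccont, hev⟩
    have := (hRs.comp hcc).mul hslopec
    rwa [mul_comm] at this

/-- deterministic per-cycle core of Theorem 2 (second derivative).
`f` is convex, nondecreasing, vanishing on `(-∞,0]`; `g = f'₊` is its right
derivative (nondecreasing and right-continuous) with Lebesgue–Stieltjes measure
`μ'`; `c` is differentiable on a neighborhood of `θ`, `c'` has a right
derivative `c2` at `θ`, and `c(θ) > T`. Then with `a = c(θ) − T`,
`L = c'(θ)` and `H(θ') = ∫₀^T f((c(θ') − t)⁺) dt`, the derivative `H'` has a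
right derivative at `θ` equal to
`c2·[f(c(θ)) − f(a)] + L²·[g(c(θ)) − g(a) − 1_{L<0}(μ'{c(θ)} − μ'{a})]`. -/
theorem stmt_7 (f : ℝ → ℝ) (hf_conv : ConvexOn ℝ Set.univ f)
    (hf_mono : Monotone f) (hf0 : ∀ x ≤ 0, f x = 0)
    (g : ℝ → ℝ) (hg : ∀ x, HasDerivWithinAt f (g x) (Ioi x) x)
    (hg_mono : Monotone g) (hg_rc : ∀ x, ContinuousWithinAt g (Ici x) x)
    (μ' : Measure ℝ)
    (hμ' : ∀ a b, a ≤ b → μ' (Ioc a b) = ENNReal.ofReal (g b - g a))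
    (T : ℝ) (hT : 0 < T) (θ : ℝ) (c : ℝ → ℝ)
    (hc : ∀ᶠ θ' in nhds θ, DifferentiableAt ℝ c θ')
    (c2 : ℝ) (hc2 : HasDerivWithinAt (deriv c) c2 (Ici θ) θ)
    (hcT : T < c θ) :
    HasDerivWithinAt
      (deriv (fun θ' => ∫ t in (0 : ℝ)..T, f (max (c θ' - t) 0)))
      (c2 * (f (c θ) - f (c θ - T)) +
        (deriv c θ) ^ 2 * (g (c θ) - g (c θ - T) -
          (if deriv c θ < 0 then 1 else 0) *
            ((μ' {c θ}).toReal - (μ' {c θ - T}).toReal)))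
      (Ici θ) θ := by
  have hfL : ∀ x, HasDerivWithinAt f (leftLim g x) (Iic x) x :=
    fun x => aux_left_deriv hf_conv hg hg_mono x
  -- continuity of f
  have hf_cont : Continuous f := by
    rw [continuous_iff_continuousAt]
    intro x
    have h1 := (hfL x).continuousWithinAt
    have h2 := (hg x).continuousWithinAt
    have h3 := h1.union h2
    rwa [Iic_union_Ioi, continuousWithinAt_univ] at h3
  -- FTC
  set F : ℝ → ℝ := fun x => ∫ u in (0:ℝ)..x, f u with hF_def
  have hF : ∀ x, HasDerivAt F (f x) x := by
    intro x
    exact intervalIntegral.integral_hasDerivAt_right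
      (hf_cont.intervalIntegrable _ _)
      hf_cont.stronglyMeasurable.stronglyMeasurableAtFilter
      hf_cont.continuousAt
  -- the open set W
  obtain ⟨U, hUsub, hUopen, hθU⟩ := eventually_nhds_iff.mp hc
  set H : ℝ → ℝ := fun θ' => ∫ t in (0 : ℝ)..T, f (max (c θ' - t) 0) with hH_def
  set W : Set ℝ := U ∩ c ⁻¹' (Ioi T) with hW_def
  have hWmem : ∀ x ∈ W, W ∈ 𝓝 x := by
    intro x hx
    exact Filter.inter_mem (hUopen.mem_nhds hx.1)
      ((hUsub x hx.1).continuousAt.preimage_mem_nhds (Ioi_mem_nhds hx.2))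
  have hθW : θ ∈ W := ⟨hθU, hcT⟩
  -- H equals F ∘ c - F ∘ (c - T) on W
  have hH_eq : ∀ x ∈ W, H x = F (c x) - F (c x - T) := by
    intro x hx
    have hcx : T < c x := hx.2
    have step1 : H x = ∫ t in (0:ℝ)..T, f (c x - t) := by
      apply intervalIntegral.integral_congr
      intro t ht
      rw [uIcc_of_le hT.le] at ht
      show f (max (c x - t) 0) = f (c x - t)
      rw [max_eq_left (by linarith [ht.1, ht.2] : (0:ℝ) ≤ c x - t)]
    rw [step1, intervalIntegral.integral_comp_sub_left f (c x), sub_zero]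
    exact (intervalIntegral.integral_interval_sub_left
      (hf_cont.intervalIntegrable _ _) (hf_cont.intervalIntegrable _ _)).symm
  -- derivative of H on W
  have hderiv_eq : ∀ x ∈ W, deriv H x = deriv c x * (f (c x) - f (c x - T)) := by
    intro x hx
    have hcd : DifferentiableAt ℝ c x := hUsub x hx.1
    have hG : HasDerivAt (fun y => F (c y) - F (c y - T))
        (f (c x) * deriv c x - f (c x - T) * deriv c x) x :=
      ((hF (c x)).comp x hcd.hasDerivAt).sub
        (by have := (hF (c x - T)).comp x (hcd.hasDerivAt.sub_const T); exact this)
    have hHd : HasDerivAt H (f (c x) * deriv c x - f (c x - T) * deriv c x) x := by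
      apply hG.congr_of_eventuallyEq
      exact eventually_of_mem (hWmem x hx) hH_eq
    rw [hHd.deriv]
    ring
  -- derivative of the product at θ
  have hcθ : DifferentiableAt ℝ c θ := hUsub θ hθU
  have hcIci : HasDerivWithinAt c (deriv c θ) (Ici θ) θ :=
    hcθ.hasDerivAt.hasDerivWithinAt
  have hchain1 : HasDerivWithinAt (fun t => f (c t))
      (deriv c θ * (if deriv c θ < 0 then leftLim g (c θ) else g (c θ))) (Ici θ) θ :=
    aux_chain (hg (c θ)) (hfL (c θ)) hcIci
  have hchain2 : HasDerivWithinAt (fun t => f (c t - T))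
      (deriv c θ * (if deriv c θ < 0 then leftLim g (c θ - T) else g (c θ - T))) (Ici θ) θ :=
    aux_chain (c := fun t => c t - T) (hg (c θ - T)) (hfL (c θ - T)) (hcIci.sub_const T)
  have hv := hchain1.sub hchain2
  have hP := hc2.mul hv
  have heq : deriv H =ᶠ[𝓝 θ] fun x => deriv c x * (f (c x) - f (c x - T)) :=
    eventually_of_mem (hWmem θ hθW) hderiv_eq
  have hfinal := hP.congr_of_eventuallyEq (heq.filter_mono nhdsWithin_le_nhds)
    heq.self_of_nhds
  have hval : c2 * (f (c θ) - f (c θ - T)) + deriv c θ *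
      (deriv c θ * (if deriv c θ < 0 then leftLim g (c θ) else g (c θ)) -
       deriv c θ * (if deriv c θ < 0 then leftLim g (c θ - T) else g (c θ - T))) =
      c2 * (f (c θ) - f (c θ - T)) +
        (deriv c θ) ^ 2 * (g (c θ) - g (c θ - T) -
          (if deriv c θ < 0 then 1 else 0) *
            ((μ' {c θ}).toReal - (μ' {c θ - T}).toReal)) := by
    rw [aux_singleton hg_mono μ' hμ' (c θ), aux_singleton hg_mono μ' hμ' (c θ - T)]
    by_cases hL : deriv c θ < 0
    · simp only [if_pos hL]
      ring
    · simp only [if_neg hL]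
      ring
  simp only [Pi.sub_apply] at hfinal
  rw [hval] at hfinal
  exact hfinal
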